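/- Let S_1,...,S_{n+m} be exchangeable real random variables with no ties almost surely, and define conformal p-values p_i = (1/(n+1))(1 + #{j ≤ n : S_j ≥ S_{n+i}}) for i in [m]. Then the joint distribution of (p_1,...,p_m) depends only on n and m, not on the particular exchangeable score distribution. -/

import Mathlib

open MeasureTheory ProbabilityTheory

/-- Split conformal p-value: `pval n S i ω` is the p-value of test score `S (n+i)`
relative to calibration scores `S 0, …, S (n-1)`. -/
noncomputable def pval {Ω : Type*} (n : ℕ) (S : ℕ → Ω → ℝ) (i : ℕ) (ω : Ω) : ℝ :=
  (1 + ((Finset.range n).filter (fun j => S (n + i) ω ≤ S j ω)).card) / (n + 1)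

/-- The first `N` scores form an exchangeable family. -/
def Exchangeable {Ω : Type*} [MeasurableSpace Ω] (P : Measure Ω) (N : ℕ)
    (S : ℕ → Ω → ℝ) : Prop :=
  ∀ σ : Equiv.Perm (Fin N),
    Measure.map (fun ω => fun i : Fin N => S (σ i) ω) P
      = Measure.map (fun ω => fun i : Fin N => S i ω) P

/-- The first `N` scores have no ties almost surely. -/
def NoTies {Ω : Type*} [MeasurableSpace Ω] (P : Measure Ω) (N : ℕ)
    (S : ℕ → Ω → ℝ) : Prop :=
  ∀ᵐ ω ∂P, ∀ i < N, ∀ j < N, i ≠ j → S i ω ≠ S j ω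

/-- The p-value vector computed from the order pattern `σ` alone. -/
noncomputable def patfun (n m : ℕ) (σ : Equiv.Perm (Fin (n + m))) : Fin m → ℝ :=
  fun i => (1 + ((Finset.univ.filter (fun j : Fin (n + m) =>
      (j : ℕ) < n ∧ σ ⟨n + i, Nat.add_lt_add_left i.isLt n⟩ ≤ σ j)).card : ℝ)) / (n + 1)

lemma pvec_measurable {Ω : Type*} [MeasurableSpace Ω] (n m : ℕ) (S : ℕ → Ω → ℝ)
    (hS : ∀ i, Measurable (S i)) :
    Measurable (fun ω => fun i : Fin m => pval n S i ω) := by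
  refine measurable_pi_lambda _ (fun i => ?_)
  have h1 : (fun ω => pval n S i ω)
      = fun ω => (1 + ∑ j ∈ Finset.range n,
          (if S (n + i) ω ≤ S j ω then (1:ℝ) else 0)) / (n + 1) := by
    funext ω
    simp only [pval, Finset.card_filter]
    push_cast
    rfl
  rw [h1]
  refine Measurable.div_const ?_ _
  refine Measurable.add measurable_const ?_
  refine Finset.measurable_sum _ (fun j _ => ?_)
  exact Measurable.ite (measurableSet_le (hS (n + i)) (hS j)) measurable_const measurable_const

/-- Key lemma: the law of the p-value vector equals an explicit universal measure,
uniform over order patterns. -/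
lemma map_pval_eq {Ω : Type*} [MeasurableSpace Ω] (P : Measure Ω) [IsProbabilityMeasure P]
    (n m : ℕ) (S : ℕ → Ω → ℝ) (hS : ∀ i, Measurable (S i))
    (hex : Exchangeable P (n + m) S) (hnt : NoTies P (n + m) S) :
    Measure.map (fun ω => fun i : Fin m => pval n S i ω) P
      = ∑ σ : Equiv.Perm (Fin (n + m)),
          ((Fintype.card (Equiv.Perm (Fin (n + m))) : ENNReal))⁻¹ • Measure.dirac (patfun n m σ) := by
  classical
  set N := n + m with hNdef
  -- order pattern events
  set A : Equiv.Perm (Fin N) → Set Ω :=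
    fun σ => {ω | ∀ i j : Fin N, S i ω ≤ S j ω ↔ σ i ≤ σ j} with hA
  have hAmeas : ∀ σ, MeasurableSet (A σ) := by
    intro σ
    have h : A σ = ⋂ i : Fin N, ⋂ j : Fin N, {ω | S i ω ≤ S j ω ↔ σ i ≤ σ j} := by
      ext ω; simp [hA, Set.mem_iInter]
    rw [h]
    refine MeasurableSet.iInter fun i => MeasurableSet.iInter fun j => ?_
    by_cases hij : σ i ≤ σ j
    · simp only [hij, iff_true]
      exact measurableSet_le (hS i) (hS j)
    · simp only [hij, iff_false]
      exact (measurableSet_le (hS i) (hS j)).compl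
  -- disjointness
  have hdisj : Pairwise (Function.onFun Disjoint A) := by
    intro σ τ hne
    rw [Function.onFun, Set.disjoint_left]
    intro ω hσ hτ
    apply hne
    have key : ∀ i j : Fin N, σ i ≤ σ j ↔ τ i ≤ τ j :=
      fun i j => (hσ i j).symm.trans (hτ i j)
    have hsm : StrictMono (fun a => τ (σ.symm a)) := by
      intro a b hab
      have h1 : σ (σ.symm a) ≤ σ (σ.symm b) := by
        simpa using hab.le
      have h2 : τ (σ.symm a) ≤ τ (σ.symm b) := (key _ _).mp h1
      refine lt_of_le_of_ne h2 (fun h => hab.ne ?_)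
      have := σ.symm.injective (τ.injective h)
      simpa using congrArg σ this
    have hsurj : Function.Surjective (fun a => τ (σ.symm a)) :=
      (σ.symm.trans τ).surjective
    have he : StrictMono.orderIsoOfSurjective _ hsm hsurj = OrderIso.refl (Fin N) :=
      Subsingleton.elim _ _
    have hid : ∀ a, τ (σ.symm a) = a := by
      intro a
      have h1 : τ (σ.symm a) = (StrictMono.orderIsoOfSurjective _ hsm hsurj) a := rfl
      rw [h1, he]
      rfl
    refine Equiv.ext fun i => ?_
    have := hid (σ i)
    rw [Equiv.symm_apply_apply] at this
    exact this.symm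
  -- a.e. cover
  have hcov : ∀ᵐ ω ∂P, ω ∈ ⋃ σ, A σ := by
    filter_upwards [hnt] with ω hω
    set x : Fin N → ℝ := fun i => S i ω with hx
    have hinj : Function.Injective x := by
      intro i j h
      by_contra hne
      exact hω i i.isLt j j.isLt (fun hc => hne (Fin.ext hc)) h
    set g := Tuple.sort x with hg
    have hmono := Tuple.monotone_sort x
    have hsm : StrictMono (x ∘ g) := hmono.strictMono_of_injective (hinj.comp g.injective)
    refine Set.mem_iUnion.mpr ⟨g⁻¹, fun i j => ?_⟩
    have hi : x i = (x ∘ g) (g⁻¹ i) := by simp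
    have hj : x j = (x ∘ g) (g⁻¹ j) := by simp
    constructor
    · intro h
      have : (x ∘ g) (g⁻¹ i) ≤ (x ∘ g) (g⁻¹ j) := by rw [← hi, ← hj]; exact h
      exact hsm.le_iff_le.mp this
    · intro h
      have : (x ∘ g) (g⁻¹ i) ≤ (x ∘ g) (g⁻¹ j) := hsm.le_iff_le.mpr h
      rw [← hi, ← hj] at this
      exact this
  -- constant value on A σ
  have hval : ∀ σ : Equiv.Perm (Fin N), ∀ ω ∈ A σ,
      (fun i : Fin m => pval n S i ω) = patfun n m σ := by
    intro σ ω hω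
    funext i
    have hcard : ((Finset.range n).filter (fun j => S (n + (i : ℕ)) ω ≤ S j ω)).card
        = (Finset.univ.filter (fun j : Fin N => (j : ℕ) < n ∧
            σ ⟨n + i, Nat.add_lt_add_left i.isLt n⟩ ≤ σ j)).card := by
      refine Finset.card_bij
        (fun j hj => (⟨j, lt_of_lt_of_le (Finset.mem_range.mp (Finset.mem_filter.mp hj).1)
          (Nat.le_add_right n m)⟩ : Fin N)) ?_ ?_ ?_
      · intro a ha
        obtain ⟨ha1, ha2⟩ := Finset.mem_filter.mp ha
        have halt := Finset.mem_range.mp ha1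
        refine Finset.mem_filter.mpr ⟨Finset.mem_univ _, halt, ?_⟩
        exact (hω ⟨n + i, Nat.add_lt_add_left i.isLt n⟩
          ⟨a, lt_of_lt_of_le halt (Nat.le_add_right n m)⟩).mp ha2
      · intro a1 h1 a2 h2 h
        simpa using congrArg Fin.val h
      · intro b hb
        obtain ⟨-, hb1, hb2⟩ := Finset.mem_filter.mp hb
        refine ⟨(b : ℕ), ?_, ?_⟩
        · refine Finset.mem_filter.mpr ⟨Finset.mem_range.mpr hb1, ?_⟩
          have := (hω ⟨n + i, Nat.add_lt_add_left i.isLt n⟩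
            ⟨(b : ℕ), lt_of_lt_of_le hb1 (Nat.le_add_right n m)⟩).mpr
          exact this hb2
        · exact Fin.ext rfl
    simp only [pval, patfun, hcard]
    rfl
  -- exchangeability gives equal probabilities
  set X : Ω → (Fin N → ℝ) := fun ω => fun i : Fin N => S i ω with hX
  have hXmeas : Measurable X := measurable_pi_lambda _ (fun i => hS i)
  set C : Equiv.Perm (Fin N) → Set (Fin N → ℝ) :=
    fun σ => {x | ∀ i j : Fin N, x i ≤ x j ↔ σ i ≤ σ j} with hC
  have hCmeas : ∀ σ, MeasurableSet (C σ) := by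
    intro σ
    have h : C σ = ⋂ i : Fin N, ⋂ j : Fin N, {x : Fin N → ℝ | x i ≤ x j ↔ σ i ≤ σ j} := by
      ext x; simp [hC, Set.mem_iInter]
    rw [h]
    refine MeasurableSet.iInter fun i => MeasurableSet.iInter fun j => ?_
    by_cases hij : σ i ≤ σ j
    · simp only [hij, iff_true]
      exact measurableSet_le (measurable_pi_apply i) (measurable_pi_apply j)
    · simp only [hij, iff_false]
      exact (measurableSet_le (measurable_pi_apply i) (measurable_pi_apply j)).compl
  have hpre : ∀ σ, X ⁻¹' C σ = A σ := fun σ => rfl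
  have hAeq : ∀ σ π : Equiv.Perm (Fin N), P (A (σ * π⁻¹)) = P (A σ) := by
    intro σ π
    have h2 : Measurable (fun ω => fun i : Fin N => S (π i) ω) :=
      measurable_pi_lambda _ (fun i => hS _)
    have h1 := congrArg (fun μ => μ (C σ)) (hex π)
    rw [Measure.map_apply h2 (hCmeas σ), Measure.map_apply hXmeas (hCmeas σ)] at h1
    have hset : (fun ω => fun i : Fin N => S (π i) ω) ⁻¹' C σ = A (σ * π⁻¹) := by
      ext ω
      simp only [Set.mem_preimage, hA, hC, Set.mem_setOf_eq, Equiv.Perm.mul_apply]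
      constructor
      · intro h i j
        have := h (π⁻¹ i) (π⁻¹ j)
        simpa using this
      · intro h i j
        have := h (π i) (π j)
        simpa using this
    rw [hset, hpre] at h1
    exact h1
  have hconst : ∀ σ : Equiv.Perm (Fin N), P (A σ) = P (A 1) := by
    intro σ
    have := hAeq σ σ
    rw [mul_inv_cancel] at this
    exact this.symm
  -- sum to one
  have hiUnion_meas : MeasurableSet (⋃ σ, A σ) := MeasurableSet.iUnion hAmeas
  have hcompl0 : P (⋃ σ, A σ)ᶜ = 0 := ae_iff.mp hcov
  have hiUnion1 : P (⋃ σ, A σ) = 1 := by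
    have h := measure_add_measure_compl (μ := P) hiUnion_meas
    rw [hcompl0, add_zero] at h
    simpa using h
  have hsum : ∑ σ : Equiv.Perm (Fin N), P (A σ) = 1 := by
    rw [← tsum_fintype (L := SummationFilter.unconditional _), ← measure_iUnion hdisj hAmeas, hiUnion1]
  have hc : ∀ σ : Equiv.Perm (Fin N),
      P (A σ) = ((Fintype.card (Equiv.Perm (Fin N)) : ENNReal))⁻¹ := by
    intro σ
    have hall : ∑ τ : Equiv.Perm (Fin N), P (A τ)
        = (Fintype.card (Equiv.Perm (Fin N)) : ENNReal) * P (A σ) := by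
      rw [Finset.sum_congr rfl (fun τ _ => (hconst τ).trans (hconst σ).symm)]
      simp [Finset.sum_const, nsmul_eq_mul]
    have hone : (Fintype.card (Equiv.Perm (Fin N)) : ENNReal) * P (A σ) = 1 := by
      rw [← hall, hsum]
    have hcard0 : (Fintype.card (Equiv.Perm (Fin N)) : ENNReal) ≠ 0 :=
      Nat.cast_ne_zero.mpr Fintype.card_ne_zero
    calc P (A σ)
        = (Fintype.card (Equiv.Perm (Fin N)) : ENNReal)⁻¹
            * ((Fintype.card (Equiv.Perm (Fin N)) : ENNReal) * P (A σ)) := by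
          rw [← mul_assoc, ENNReal.inv_mul_cancel hcard0 (ENNReal.natCast_ne_top _), one_mul]
      _ = (Fintype.card (Equiv.Perm (Fin N)) : ENNReal)⁻¹ := by rw [hone, mul_one]
  -- conclude
  have hpvmeas : Measurable (fun ω => fun i : Fin m => pval n S i ω) :=
    pvec_measurable n m S hS
  refine Measure.ext fun s hs => ?_
  rw [Measure.map_apply hpvmeas hs, Measure.finset_sum_apply]
  set pre : Set Ω := (fun ω => fun i : Fin m => pval n S i ω) ⁻¹' s with hpredef
  have hpremeas : MeasurableSet pre := hpvmeas hs
  have hsplit : P pre = ∑ σ : Equiv.Perm (Fin N), P (A σ ∩ pre) := by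
    have h0 : (⋃ σ, A σ ∩ pre) =ᵐ[P] pre := by
      rw [Filter.eventuallyEq_set]
      filter_upwards [hcov] with ω hω
      simp only [Set.mem_iUnion, Set.mem_inter_iff]
      constructor
      · rintro ⟨σ, -, h⟩; exact h
      · intro h
        obtain ⟨σ, hσ⟩ := Set.mem_iUnion.mp hω
        exact ⟨σ, hσ, h⟩
    have h1 : P (⋃ σ, A σ ∩ pre) = ∑' σ : Equiv.Perm (Fin N), P (A σ ∩ pre) := by
      refine measure_iUnion ?_ (fun σ => (hAmeas σ).inter hpremeas)
      intro σ τ hne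
      exact Disjoint.mono Set.inter_subset_left Set.inter_subset_left (hdisj hne)
    rw [← measure_congr h0, h1, tsum_fintype]
  rw [hsplit]
  refine Finset.sum_congr rfl (fun σ _ => ?_)
  rw [Measure.smul_apply, Measure.dirac_apply' _ hs]
  by_cases hmem : patfun n m σ ∈ s
  · have heq : A σ ∩ pre = A σ := by
      refine Set.inter_eq_left.mpr (fun ω hω => ?_)
      have := hval σ ω hω
      simp only [hpredef, Set.mem_preimage]
      rw [this]
      exact hmem
    rw [heq, hc σ]
    simp [Set.indicator_apply, hmem]
    rfl
  · have heq : A σ ∩ pre = ∅ := by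
      refine Set.eq_empty_iff_forall_notMem.mpr (fun ω hω => ?_)
      obtain ⟨h1, h2⟩ := hω
      have := hval σ ω h1
      rw [hpredef, Set.mem_preimage, this] at h2
      exact hmem h2
    rw [heq]
    simp [Set.indicator_apply, hmem]

/-- the joint law of the conformal p-values is the same for any two
exchangeable, tie-free score distributions: it depends only on `n` and `m`. -/
theorem conformal_joint_law_universal
    {Ω Ω' : Type*} [MeasurableSpace Ω] [MeasurableSpace Ω']
    (P : Measure Ω) (P' : Measure Ω')
    [IsProbabilityMeasure P] [IsProbabilityMeasure P']
    (n m : ℕ) (S : ℕ → Ω → ℝ) (S' : ℕ → Ω' → ℝ)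
    (hS : ∀ i, Measurable (S i)) (hS' : ∀ i, Measurable (S' i))
    (hex : Exchangeable P (n + m) S) (hex' : Exchangeable P' (n + m) S')
    (hnt : NoTies P (n + m) S) (hnt' : NoTies P' (n + m) S') :
    Measure.map (fun ω => fun i : Fin m => pval n S i ω) P
      = Measure.map (fun ω => fun i : Fin m => pval n S' i ω) P' := by
  rw [map_pval_eq P n m S hS hex hnt, map_pval_eq P' n m S' hS' hex' hnt']
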